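/- (Landau's theorem) Let Σ_{n=1}^∞ a_n n^{-s} be a Dirichlet series with nonnegative real coefficients a_n ≥ 0, and let σ ∈ ℝ be its abscissa of convergence (assumed finite). Then the sum function cannot be extended to a function holomorphic in any neighborhood of the real point s = σ; i.e., s = σ is a singularity of the Dirichlet series. -/

import Mathlib

open Complex LSeries Filter Nat

/-- Iterated `logMul` of a real nonnegative sequence, explicitly. -/
lemma logPowMul_apply (a : ℕ → ℝ) (m n : ℕ) (hn : n ≠ 0) :
    (LSeries.logMul^[m] (fun k => (a k : ℂ))) n = ((Real.log n) ^ m * a n : ℝ) := by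
  induction m with
  | zero => simp
  | succ m ih =>
      rw [Function.iterate_succ_apply', LSeries.logMul, ih, ← Complex.natCast_log]
      push_cast
      ring

lemma term_logPowMul (a : ℕ → ℝ) (m n : ℕ) (x₀ : ℝ) :
    LSeries.term (LSeries.logMul^[m] (fun k => (a k : ℂ))) (x₀ : ℂ) n
      = ((if n = 0 then (0 : ℝ) else (Real.log n) ^ m * a n / (n : ℝ) ^ x₀ : ℝ) : ℂ) := by
  rcases eq_or_ne n 0 with rfl | hn
  · simp
  · rw [if_neg hn, LSeries.term_of_ne_zero hn, logPowMul_apply a m n hn,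
      Complex.ofReal_div, Complex.ofReal_cpow (Nat.cast_nonneg n), Complex.ofReal_natCast]

lemma real_exp_eq_tsum (t : ℝ) : Real.exp t = ∑' m : ℕ, t ^ m / m ! := by
  rw [Real.exp_eq_exp_ℝ, NormedSpace.exp_eq_tsum_div]

lemma summable_exp_series (t : ℝ) : Summable fun m : ℕ => t ^ m / (m ! : ℝ) := by
  exact_mod_cast NormedSpace.expSeries_div_summable t

set_option maxHeartbeats 2000000 in
theorem stmt10 (a : ℕ → ℝ) (ha : ∀ n, 0 ≤ a n) (σ : ℝ)
    (hσ : LSeries.abscissaOfAbsConv (fun n => (a n : ℂ)) = (σ : EReal)) :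
    ¬ ∃ (U : Set ℂ) (f : ℂ → ℂ), IsOpen U ∧ (σ : ℂ) ∈ U ∧ DifferentiableOn ℂ f U ∧
      ∀ s ∈ U, σ < s.re → f s = LSeries (fun n => (a n : ℂ)) s := by
  rintro ⟨U, f, hU, hσU, hf, hfeq⟩
  set A : ℕ → ℂ := fun n => (a n : ℂ) with hA
  -- the open right half-plane of convergence
  set P : Set ℂ := {s : ℂ | σ < s.re} with hP
  have hPopen : IsOpen P := isOpen_lt continuous_const continuous_re
  have habs : ∀ {s : ℂ}, σ < s.re → abscissaOfAbsConv A < s.re := by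
    intro s hs
    rw [hσ]
    exact_mod_cast hs
  -- glue `f` and the L-series
  set g : ℂ → ℂ := fun s => if σ < s.re then LSeries A s else f s with hg
  have hgf : Set.EqOn g f U := by
    intro s hsU
    by_cases h : σ < s.re
    · simp only [hg, if_pos h]
      exact (hfeq s hsU h).symm
    · simp only [hg, if_neg h]
  have hgP : Set.EqOn g (LSeries A) P := by
    intro s hs
    exact if_pos hs
  have hgdiff : DifferentiableOn ℂ g (U ∪ P) := by
    rintro s (hs | hs)
    · exact ((hf.differentiableAt (hU.mem_nhds hs)).congr_of_eventuallyEq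
        ((hU.eventually_mem hs).mono fun t ht => hgf ht)).differentiableWithinAt
    · have hL : DifferentiableAt ℂ (LSeries A) s := (LSeries_hasDerivAt (habs hs)).differentiableAt
      exact (hL.congr_of_eventuallyEq
        ((hPopen.eventually_mem hs).mono fun t ht => hgP ht)).differentiableWithinAt
  -- choose a ball around σ inside U
  obtain ⟨ε, hε, hball⟩ := Metric.isOpen_iff.mp hU _ hσU
  set x₀ : ℝ := σ + ε / 4 with hx₀def
  set x : ℝ := σ - ε / 8 with hxdef
  have hxx₀ : x < x₀ := by rw [hx₀def, hxdef]; linarith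
  have hσx₀ : σ < x₀ := by rw [hx₀def]; linarith
  have hxσ : x < σ := by rw [hxdef]; linarith
  have hx₀re : (x₀ : ℂ) ∈ P := by
    simp only [hP, Set.mem_setOf_eq, Complex.ofReal_re]; exact hσx₀
  -- the ball around x₀ of radius ε/2 is contained in U
  have hballU : Metric.ball (x₀ : ℂ) (ε / 2) ⊆ U := by
    intro s hs
    apply hball
    rw [Metric.mem_ball] at hs ⊢
    have hd : dist (x₀ : ℂ) (σ : ℂ) = ε / 4 := by
      rw [Complex.dist_eq, ← Complex.ofReal_sub, Complex.norm_real, Real.norm_eq_abs, hx₀def,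
        add_sub_cancel_left, abs_of_pos (by linarith)]
    calc dist s (σ : ℂ) ≤ dist s (x₀ : ℂ) + dist (x₀ : ℂ) (σ : ℂ) := dist_triangle _ _ _
      _ < ε / 2 + ε / 4 := by rw [hd]; exact add_lt_add_left hs _
      _ ≤ ε := by linarith
  have hxball : (x : ℂ) ∈ Metric.ball (x₀ : ℂ) (ε / 2) := by
    rw [Metric.mem_ball, Complex.dist_eq, ← Complex.ofReal_sub, Complex.norm_real, Real.norm_eq_abs,
      abs_of_neg (by linarith : x - x₀ < 0)]
    rw [hxdef, hx₀def]
    linarith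
  -- Taylor expansion of g at x₀, evaluated at x
  have hTay : HasSum (fun m : ℕ => (m ! : ℂ)⁻¹ • ((x : ℂ) - (x₀ : ℂ)) ^ m •
      iteratedDeriv m g (x₀ : ℂ)) (g (x : ℂ)) :=
    Complex.hasSum_taylorSeries_on_ball
      (hgdiff.mono (hballU.trans Set.subset_union_left)) hxball
  -- identify iterated derivatives of g with those of the L-series
  have hgit : ∀ m, iteratedDeriv m g (x₀ : ℂ)
      = (-1) ^ m * LSeries (LSeries.logMul^[m] A) (x₀ : ℂ) := by
    intro m
    rw [hgP.iteratedDeriv_of_isOpen hPopen m hx₀re]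
    exact LSeries_iteratedDeriv m (habs (by simpa using hσx₀))
  -- real coefficients
  set c : ℕ → ℕ → ℝ := fun m n =>
    if n = 0 then (0 : ℝ) else (Real.log n) ^ m * a n / (n : ℝ) ^ x₀ with hc
  have hc0 : ∀ m n, 0 ≤ c m n := by
    intro m n
    simp only [hc]
    split
    · exact le_rfl
    · have h1 := ha n
      have h2 : 0 ≤ Real.log n := Real.log_natCast_nonneg n
      positivity
  have hcterm : ∀ m n, LSeries.term (LSeries.logMul^[m] A) (x₀ : ℂ) n = ((c m n : ℝ) : ℂ) :=
    fun m n => term_logPowMul a m n x₀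
  have hcsum : ∀ m, Summable (c m) := by
    intro m
    have hs : LSeriesSummable (LSeries.logMul^[m] A) (x₀ : ℂ) := by
      refine LSeriesSummable_of_abscissaOfAbsConv_lt_re ?_
      rw [LSeries.absicssaOfAbsConv_logPowMul]
      exact habs (by simpa using hσx₀)
    exact Complex.summable_ofReal.mp (hs.congr fun n => hcterm m n)
  have hLval : ∀ m, LSeries (LSeries.logMul^[m] A) (x₀ : ℂ) = ((∑' n, c m n : ℝ) : ℂ) := by
    intro m
    rw [LSeries, Complex.ofReal_tsum]
    exact tsum_congr fun n => hcterm m n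
  -- the Taylor coefficients as real numbers
  set d : ℕ → ℝ := fun m => (x₀ - x) ^ m / m ! * ∑' n, c m n with hd
  have hTay' : HasSum (fun m => ((d m : ℝ) : ℂ)) (g (x : ℂ)) := by
    refine hTay.congr_fun fun m => ?_
    rw [hgit m, hLval m]
    simp only [hd]
    have key : ((x : ℂ) - (x₀ : ℂ)) * (-1) = ((x₀ - x : ℝ) : ℂ) := by push_cast; ring
    rw [smul_eq_mul, smul_eq_mul, ← mul_assoc (((x:ℂ) - (x₀:ℂ)) ^ m), ← mul_pow, key]
    push_cast
    ring
  have hdsum : Summable d := Complex.summable_ofReal.mp hTay'.summable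
  -- double series with nonnegative terms
  set F : ℕ × ℕ → ℝ := fun p => (x₀ - x) ^ p.1 / p.1 ! * c p.1 p.2 with hF
  have hF0 : 0 ≤ F := by
    intro p
    have h0 : (0:ℝ) ≤ x₀ - x := by linarith
    have h1 : (0:ℝ) ≤ (x₀ - x) ^ p.1 := pow_nonneg h0 _
    have h2 : (0:ℝ) < (p.1 ! : ℝ) := by positivity
    exact mul_nonneg (div_nonneg h1 h2.le) (hc0 p.1 p.2)
  have hd2 : ∀ m, ∑' n, F (m, n) = d m := by
    intro m
    simp only [hF, hd]
    exact tsum_mul_left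
  have hFsum : Summable F := by
    refine (summable_prod_of_nonneg hF0).mpr ⟨fun m => ?_, hdsum.congr fun m => (hd2 m).symm⟩
    exact ((hcsum m).mul_left ((x₀ - x) ^ m / m !)).congr fun n => by simp only [hF]
  -- swap the order of summation
  have hFsum' : Summable fun p : ℕ × ℕ => F p.swap :=
    ((Equiv.prodComm ℕ ℕ).summable_iff).mpr hFsum
  have hswap := (summable_prod_of_nonneg (fun p => hF0 p.swap)).mp hFsum'
  have hsum_n : Summable fun n => ∑' m, F (m, n) := hswap.2
  -- identify the inner sums with the terms of the L-series at x
  have hinner : ∀ n, ∑' m, F (m, n) = ‖LSeries.term A (x : ℂ) n‖ := by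
    intro n
    rw [LSeries.norm_term_eq]
    rcases eq_or_ne n 0 with rfl | hn
    · have hz : ∀ m : ℕ, F (m, 0) = 0 := fun m => by simp [hF, hc]
      rw [tsum_congr hz, tsum_zero, if_pos rfl]
    · have hn0 : (0:ℝ) < (n : ℝ) := by positivity
      rw [if_neg hn, Complex.ofReal_re]
      have hAn : ‖A n‖ = a n := by
        simp only [hA, Complex.norm_real, Real.norm_eq_abs, _root_.abs_of_nonneg (ha n)]
      rw [hAn]
      have hFmn : ∀ m, F (m, n) = a n / (n:ℝ) ^ x₀ * (((x₀ - x) * Real.log n) ^ m / m !) := by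
        intro m
        simp only [hF, hc, if_neg hn, mul_pow]
        ring
      rw [tsum_congr hFmn, tsum_mul_left, ← real_exp_eq_tsum,
        mul_comm (x₀ - x) (Real.log n), ← Real.rpow_def_of_pos hn0,
        Real.rpow_sub hn0]
      have h1 : (n:ℝ) ^ x₀ ≠ 0 := by positivity
      have h2 : (n:ℝ) ^ x ≠ 0 := by positivity
      field_simp
  -- conclude: the L-series converges at x < σ, contradiction
  have hsummable : LSeriesSummable A (x : ℂ) :=
    Summable.of_norm ((hsum_n.congr hinner))
  have hle := hsummable.abscissaOfAbsConv_le
  rw [hσ, Complex.ofReal_re] at hle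
  have : σ ≤ x := EReal.coe_le_coe_iff.mp hle
  linarith
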